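/- For every bi-infinite sequence (x_n) of positive real numbers such that for all n, x_{n+1} = 2·x_n or x_{n+1} = x_n/3, the sequence is not periodic: there is no k > 0 with x_{n+k} = x_n for all n. -/

import Mathlib

theorem kari_sequence_aperiodic (x : ℤ → ℝ)
    (hpos : ∀ n, 0 < x n)
    (hstep : ∀ n, x (n + 1) = 2 * x n ∨ x (n + 1) = x n / 3) :
    ¬ ∃ k : ℤ, 0 < k ∧ ∀ n, x (n + k) = x n := by
  rintro ⟨k, hk, hper⟩
  have key : ∀ m : ℕ, ∃ a b : ℕ, a + b = m ∧ x (m : ℤ) = 2 ^ a / 3 ^ b * x 0 := by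
    intro m
    induction m with
    | zero => exact ⟨0, 0, rfl, by simp⟩
    | succ m ih =>
      obtain ⟨a, b, hab, hx⟩ := ih
      rcases hstep m with h | h
      · exact ⟨a + 1, b, by omega, by push_cast; rw [h, hx]; ring⟩
      · exact ⟨a, b + 1, by omega, by push_cast; rw [h, hx]; ring⟩
  obtain ⟨a, b, hab, hx⟩ := key k.toNat
  have hkz : ((k.toNat : ℤ)) = k := Int.toNat_of_nonneg hk.le
  rw [hkz] at hx
  have hxk : x k = x 0 := by simpa using hper 0
  have h1 : (2 : ℝ) ^ a / 3 ^ b = 1 := by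
    have h0 := hpos 0
    have := hx.symm.trans hxk
    field_simp at this
    nlinarith [pow_pos (by norm_num : (0:ℝ) < 3) b]
  have h2 : (2 : ℝ) ^ a = 3 ^ b := by
    field_simp at h1
    linarith
  have h3 : (2 : ℕ) ^ a = 3 ^ b := by
    have := h2
    exact_mod_cast this
  have ha : a = 0 := by
    by_contra h
    have : 2 ∣ 3 ^ b := h3 ▸ dvd_pow_self 2 h
    have := Nat.Prime.dvd_of_dvd_pow Nat.prime_two this
    omega
  have hb : b = 0 := by
    rw [ha] at h3
    by_contra h
    have h1 : (3:ℕ) ^ b = 1 := by simpa using h3.symm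
    have := pow_eq_one_iff.mp h1
    omega
  omega
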